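/- Let A be an n×n matrix with n ≥ 3 and a_{1,1} ≠ 0 (entries in a field). Then det A = det B / (a_{1,1})^{n-2}, where B is the (n-1)×(n-1) matrix with b_{i,j} = a_{1,1}·a_{i+1,j+1} − a_{1,j+1}·a_{i+1,1}. -/

import Mathlib

/-- Division form of Chiò condensation over a field, pivot `a₁₁ ≠ 0`. -/
theorem chio_condensation_div
    {K : Type*} [Field K] (n : ℕ)
    (A : Matrix (Fin (n + 3)) (Fin (n + 3)) K) (h : A 0 0 ≠ 0) :
    A.det =
      (Matrix.det fun i j : Fin (n + 2) =>
        A 0 0 * A i.succ j.succ - A 0 j.succ * A i.succ 0) / (A 0 0) ^ (n + 1) := by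
  set c : Fin (n + 3) → K := fun i => if i = 0 then 0 else A i 0 / A 0 0 with hc
  set B : Matrix (Fin (n + 3)) (Fin (n + 3)) K := fun i j => A i j - c i * A 0 j with hB
  have hdetA : A.det = B.det := by
    apply Matrix.det_eq_of_forall_row_eq_smul_add_const c 0 (by simp [hc])
    intro i j
    have h0j : B 0 j = A 0 j := by simp [hB, hc]
    show A i j = (A i j - c i * A 0 j) + c i * B 0 j
    rw [h0j]; ring
  have hBcol : ∀ i : Fin (n + 2), B i.succ 0 = 0 := by
    intro i
    have : (i.succ : Fin (n + 3)) ≠ 0 := Fin.succ_ne_zero i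
    simp only [hB, hc, if_neg this]
    field_simp
    ring
  set C : Matrix (Fin (n + 2)) (Fin (n + 2)) K :=
    fun i j => A i.succ j.succ - A i.succ 0 / A 0 0 * A 0 j.succ with hC
  have hdetB : B.det = A 0 0 * C.det := by
    rw [Matrix.det_succ_column_zero]
    rw [Fin.sum_univ_succ]
    have h0 : ∀ i : Fin (n + 2),
        (-1 : K) ^ ((i.succ : Fin (n+3)) : ℕ) * B i.succ 0 *
          Matrix.det (B.submatrix (Fin.succAbove i.succ) Fin.succ) = 0 := by
      intro i; rw [hBcol]; ring
    rw [Finset.sum_congr rfl (fun i _ => h0 i), Finset.sum_const_zero, add_zero]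
    have hB00 : B 0 0 = A 0 0 := by simp [hB, hc]
    have hsub : B.submatrix (Fin.succAbove 0) Fin.succ = C := by
      ext i j
      simp [hB, hc, hC, Fin.succAbove_zero, Fin.succ_ne_zero, Matrix.submatrix, Matrix.of_apply]
    rw [hsub, hB00]
    simp
  have hdetC : (Matrix.det fun i j : Fin (n + 2) =>
      A 0 0 * A i.succ j.succ - A 0 j.succ * A i.succ 0) = A 0 0 ^ (n + 2) * C.det := by
    have : (fun i j : Fin (n + 2) =>
        A 0 0 * A i.succ j.succ - A 0 j.succ * A i.succ 0) = A 0 0 • C := by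
      ext i j
      show _ = A 0 0 * C i j
      simp only [hC, Matrix.smul_apply, smul_eq_mul]
      field_simp
    rw [this, Matrix.det_smul, Fintype.card_fin]
  rw [hdetA, hdetB, hdetC]
  field_simp
  ring
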